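/- Let n ≥ 1, μ_1 ≥ … ≥ μ_n > 0 with μ_1 + … + μ_n = 1, let δ > 0, and for i ∈ {1, …, n} let σ_i = ∑_{k=1}^i μ_k and M = μ_1. Then for every i ∈ {1, …, n}, ∑_{j=1}^i log(1 − μ_j/(σ_i + δ)) = ∑_{j=1}^i (μ_j/σ_i)·Φ(μ_j/σ_i, δ/σ_i) ≥ Φ(M/σ_i, δ/σ_i). -/

import Mathlib

/-- The function `Φ : [0,1] × (0,∞) → ℝ` from the paper, extended by the given
formulas to all of `ℝ × ℝ`. -/
noncomputable def Phi (μ ρ : ℝ) : ℝ :=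
  if μ = 0 then -1 / (1 + ρ) else (1 / μ) * Real.log (1 - μ / (1 + ρ))

lemma key_log_ineq (x a b : ℝ) (hx0 : 0 ≤ x) (ha : 0 < a) (hab : a ≤ b)
    (hbx : b * x < 1) : a * Real.log (1 - b * x) ≤ b * Real.log (1 - a * x) := by
  have hb : 0 < b := lt_of_lt_of_le ha hab
  have h1 : (0:ℝ) < 1 - b * x := by linarith
  have h2 : (0:ℝ) < 1 - a * x := by nlinarith
  have hcc := strictConcaveOn_log_Ioi.concaveOn
  have hw1 : (0:ℝ) ≤ a / b := div_nonneg ha.le hb.le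
  have hw2 : (0:ℝ) ≤ 1 - a / b := by
    have : a / b ≤ 1 := (div_le_one hb).mpr hab
    linarith
  have hws : a / b + (1 - a / b) = 1 := by ring
  have h := hcc.2 (Set.mem_Ioi.mpr h1) (Set.mem_Ioi.mpr one_pos) hw1 hw2 hws
  simp only [smul_eq_mul, Real.log_one, mul_one] at h
  have heq : a / b * (1 - b * x) + (1 - a / b) = 1 - a * x := by
    field_simp; ring
  rw [heq] at h
  have hz : (1 - a / b) * 0 = 0 := mul_zero _
  rw [hz, add_zero] at h
  have h' : a / b * Real.log (1 - b * x) ≤ Real.log (1 - a * x) := by linarith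
  calc a * Real.log (1 - b * x) = b * (a / b * Real.log (1 - b * x)) := by
        field_simp
    _ ≤ b * Real.log (1 - a * x) := by
        exact mul_le_mul_of_nonneg_left h' hb.le

theorem log_sum_eq_Phi_sum_ge_Phi (n : ℕ) (hn : 0 < n) (μ : Fin n → ℝ)
    (hanti : Antitone μ) (hpos : ∀ i, 0 < μ i) (hsum : ∑ i, μ i = 1)
    (δ : ℝ) (hδ : 0 < δ) (i : Fin n) :
    (∑ j ∈ Finset.Iic i,
        Real.log (1 - μ j / ((∑ k ∈ Finset.Iic i, μ k) + δ)) =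
      ∑ j ∈ Finset.Iic i,
        (μ j / (∑ k ∈ Finset.Iic i, μ k)) *
          Phi (μ j / (∑ k ∈ Finset.Iic i, μ k)) (δ / (∑ k ∈ Finset.Iic i, μ k))) ∧
    Phi (μ ⟨0, hn⟩ / (∑ k ∈ Finset.Iic i, μ k)) (δ / (∑ k ∈ Finset.Iic i, μ k)) ≤
      ∑ j ∈ Finset.Iic i,
        Real.log (1 - μ j / ((∑ k ∈ Finset.Iic i, μ k) + δ)) := by
  set σ : ℝ := ∑ k ∈ Finset.Iic i, μ k with hσdef
  have hσ : 0 < σ :=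
    Finset.sum_pos (fun k _ => hpos k) ⟨i, Finset.mem_Iic.mpr le_rfl⟩
  have hσδ : 0 < σ + δ := by linarith
  have hρ : (1 : ℝ) + δ / σ = (σ + δ) / σ := by field_simp
  -- per-term identity
  have hterm : ∀ j ∈ Finset.Iic i,
      Real.log (1 - μ j / (σ + δ)) =
        (μ j / σ) * Phi (μ j / σ) (δ / σ) := by
    intro j _
    have hj : 0 < μ j := hpos j
    have hne : μ j / σ ≠ 0 := ne_of_gt (div_pos hj hσ)
    rw [Phi, if_neg hne, hρ]
    have harg : μ j / σ / ((σ + δ) / σ) = μ j / (σ + δ) := by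
      field_simp
    rw [harg]
    field_simp
  refine ⟨(Finset.sum_congr rfl hterm).symm ▸ rfl, ?_⟩
  · -- the inequality
    set M : ℝ := μ ⟨0, hn⟩ with hM
    have hM0 : 0 < M := hpos _
    have hMle : ∀ j : Fin n, μ j ≤ M := fun j => hanti (Fin.mk_le_of_le_val (Nat.zero_le _))
    have hMσ : M ≤ σ := by
      have : M = ∑ k ∈ {(⟨0, hn⟩ : Fin n)}, μ k := by simp [hM]
      rw [this]
      exact Finset.sum_le_sum_of_subset_of_nonneg
        (by simp [Finset.singleton_subset_iff, Finset.mem_Iic, Fin.mk_le_of_le_val])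
        (fun k _ _ => (hpos k).le)
    have hne : M / σ ≠ 0 := ne_of_gt (div_pos hM0 hσ)
    rw [Phi, if_neg hne, hρ]
    have harg : M / σ / ((σ + δ) / σ) = M / (σ + δ) := by
      field_simp
    rw [harg]
    have hx0 : (0:ℝ) ≤ 1 / (σ + δ) := by positivity
    have hMx : M * (1 / (σ + δ)) < 1 := by
      rw [mul_one_div, div_lt_one hσδ]; linarith
    -- termwise lower bound
    have hstep : ∀ j ∈ Finset.Iic i,
        (μ j / M) * Real.log (1 - M / (σ + δ)) ≤ Real.log (1 - μ j / (σ + δ)) := by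
      intro j _
      have h := key_log_ineq (1 / (σ + δ)) (μ j) M hx0 (hpos j) (hMle j) hMx
      rw [mul_one_div, mul_one_div] at h
      rw [div_mul_eq_mul_div, div_le_iff₀ hM0]
      linear_combination h
    calc 1 / (M / σ) * Real.log (1 - M / (σ + δ))
        = ∑ j ∈ Finset.Iic i, (μ j / M) * Real.log (1 - M / (σ + δ)) := by
          rw [← Finset.sum_mul, ← Finset.sum_div, ← hσdef]
          rw [one_div_div]
      _ ≤ ∑ j ∈ Finset.Iic i, Real.log (1 - μ j / (σ + δ)) :=
          Finset.sum_le_sum hstep
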